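/- Let π be a permutation of {1,…,n} that avoids the pattern 132, and let k ≥ 1. Then π contains a strictly decreasing subsequence of length k+1 (i.e., indices i1 < i2 < … < i_{k+1} with π(i1) > π(i2) > … > π(i_{k+1})) if and only if π has at least k+1 left-to-right minima. -/
import Mathlib


/-- A Dyck word of semilength `n`, as a list of booleans read left to right,
where `true` is an up-step `U` and `false` is a down-step `D`:
exactly `n` of each letter, and every prefix has at least as many `U`'s as `D`'s. -/
def IsDyckWord (n : ℕ) (w : List Bool) : Prop :=
  w.count true = n ∧ w.count false = n ∧
    ∀ k : ℕ, (w.take k).count false ≤ (w.take k).count true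

/-- The number of peaks of a word: positions where a `U` is immediately followed by a `D`. -/
def numPeaks (w : List Bool) : ℕ := (w.zip w.tail).count (true, false)

/-- The word `U^a D^b`. -/
def upDown (a b : ℕ) : List Bool :=
  List.replicate a true ++ List.replicate b false

/-- A permutation `π` of `{0, …, n-1}` contains the pattern `σ` (a permutation of
`{0, …, m-1}`) if some subsequence of values of `π` is in the same relative order as `σ`. -/
def ContainsPattern {n m : ℕ} (π : Equiv.Perm (Fin n)) (σ : Equiv.Perm (Fin m)) : Prop :=
  ∃ f : Fin m → Fin n, StrictMono f ∧ ∀ a b : Fin m, π (f a) < π (f b) ↔ σ a < σ b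

/-- A permutation avoids a pattern if it does not contain it. -/
def AvoidsPattern {n m : ℕ} (π : Equiv.Perm (Fin n)) (σ : Equiv.Perm (Fin m)) : Prop :=
  ¬ ContainsPattern π σ

/-- The pattern 132 (0-indexed: 021). -/
def pat132 : Equiv.Perm (Fin 3) where
  toFun := ![0, 2, 1]
  invFun := ![0, 2, 1]
  left_inv := by intro x; fin_cases x <;> rfl
  right_inv := by intro x; fin_cases x <;> rfl

/-- The pattern 321 (0-indexed: 210). -/
def pat321 : Equiv.Perm (Fin 3) where
  toFun := ![2, 1, 0]
  invFun := ![2, 1, 0]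
  left_inv := by intro x; fin_cases x <;> rfl
  right_inv := by intro x; fin_cases x <;> rfl

/-- The pattern 4321 (0-indexed: 3210). -/
def pat4321 : Equiv.Perm (Fin 4) where
  toFun := ![3, 2, 1, 0]
  invFun := ![3, 2, 1, 0]
  left_inv := by intro x; fin_cases x <;> rfl
  right_inv := by intro x; fin_cases x <;> rfl

/-- The pattern 4231 (0-indexed: 3120). -/
def pat4231 : Equiv.Perm (Fin 4) where
  toFun := ![3, 1, 2, 0]
  invFun := ![3, 1, 2, 0]
  left_inv := by intro x; fin_cases x <;> rfl
  right_inv := by intro x; fin_cases x <;> rfl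

/-- The strictly decreasing pattern `(k+1)k⋯21` of length `k+1`. -/
def patDesc (k : ℕ) : Equiv.Perm (Fin (k+1)) where
  toFun := Fin.rev
  invFun := Fin.rev
  left_inv := Fin.rev_rev
  right_inv := Fin.rev_rev

/-- `w` has exactly three peaks and, in its (unique) decomposition
`U^{a₁}D^{b₁}U^{a₂}D^{b₂}U^{a₃}D^{b₃}` with all exponents positive,
`a₂ = 1` or `b₂ = 1`. -/
def ThreePeakMiddleOne (w : List Bool) : Prop :=
  numPeaks w = 3 ∧ ∃ a₁ b₁ a₂ b₂ a₃ b₃ : ℕ,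
    0 < a₁ ∧ 0 < b₁ ∧ 0 < a₂ ∧ 0 < b₂ ∧ 0 < a₃ ∧ 0 < b₃ ∧
    w = upDown a₁ b₁ ++ upDown a₂ b₂ ++ upDown a₃ b₃ ∧ (a₂ = 1 ∨ b₂ = 1)

/-- `i` is (the position of) a left-to-right minimum of `π`. -/
def IsLtrMin {n : ℕ} (π : Equiv.Perm (Fin n)) (i : Fin n) : Prop :=
  ∀ j : Fin n, j < i → π i < π j

/-- A 132-avoiding permutation contains a strictly decreasing subsequence of
length `k+1` if and only if it has at least `k+1` left-to-right minima. -/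
theorem decreasing_subseq_iff_ltr_minima (n k : ℕ) (hk : 1 ≤ k)
    (π : Equiv.Perm (Fin n)) (h : AvoidsPattern π pat132) :
    (∃ f : Fin (k+1) → Fin n, StrictMono f ∧
        ∀ a b : Fin (k+1), a < b → π (f b) < π (f a)) ↔
      k + 1 ≤ Nat.card {i : Fin n // IsLtrMin π i} := by
  classical
  constructor
  · rintro ⟨f, hf, hdec⟩
    have hmin : ∀ a : Fin (k+1), ∃ j : Fin n, j ≤ f a ∧ ∀ j', j' ≤ f a → π j ≤ π j' := by
      intro a
      obtain ⟨j, hj, hjmin⟩ := Finset.exists_min_image (Finset.Iic (f a)) (fun i => π i)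
        ⟨f a, Finset.mem_Iic.2 le_rfl⟩
      exact ⟨j, Finset.mem_Iic.1 hj, fun j' hj' => hjmin j' (Finset.mem_Iic.2 hj')⟩
    choose g hg1 hg2 using hmin
    have hltr : ∀ a, IsLtrMin π (g a) := by
      intro a j hj
      refine (hg2 a j (hj.le.trans (hg1 a))).lt_of_ne ?_
      intro he
      exact absurd (π.injective he) (fun h' => lt_irrefl _ (h' ▸ hj))
    have key : ∀ a b : Fin (k+1), a < b → g a = g b → ContainsPattern π pat132 := by
        intro a b hlt hab
        -- g a = g b =: j, with j ≤ f a < f b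
        set j := g a with hj
        have hjle : j ≤ f a := hg1 a
        have hfab : f a < f b := hf hlt
        have hjb : π j ≤ π (f b) := hab ▸ hg2 b (f b) le_rfl
        have hjfb : j < f b := lt_of_le_of_lt hjle hfab
        have h1 : π j < π (f b) :=
          hjb.lt_of_ne (fun he => absurd (π.injective he) hjfb.ne)
        have h2 : π (f b) < π (f a) := hdec a b hlt
        have hjfa : j < f a :=
          hjle.lt_of_ne (fun he => absurd (he ▸ (h1.trans h2)) (lt_irrefl _))
        refine ⟨![j, f a, f b], ?_, ?_⟩
        · intro x y hxy
          fin_cases x <;> fin_cases y <;>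
            simp only [Matrix.cons_val_zero, Matrix.cons_val_one, Matrix.head_cons,
              Matrix.cons_val_two, Matrix.tail_cons] <;>
            first
            | exact absurd hxy (by decide)
            | exact hjfa | exact hjfb | exact hfab
        · intro x y
          have h3 : π j < π (f a) := h1.trans h2
          fin_cases x <;> fin_cases y <;>
            simp only [pat132, Equiv.coe_fn_mk, Matrix.cons_val_zero, Matrix.cons_val_one,
              Matrix.head_cons, Matrix.cons_val_two, Matrix.tail_cons] <;>
            constructor <;> intro hc <;>
            first
            | exact h1 | exact h2 | exact h3 | decide
            | exact absurd hc (by decide)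
            | exact absurd hc (by
                first | exact h1.not_gt | exact h2.not_gt | exact h3.not_gt | exact lt_irrefl _)
    have hginj : Function.Injective g := by
      intro a b hab
      by_contra hne
      rcases lt_or_gt_of_ne hne with hlt | hlt
      · exact absurd (key a b hlt hab) h
      · exact absurd (key b a hlt hab.symm) h
    have : Function.Injective (fun a : Fin (k+1) => (⟨g a, hltr a⟩ : {i : Fin n // IsLtrMin π i})) := by
      intro a b hab
      exact hginj (congrArg Subtype.val hab)
    calc k + 1 = Nat.card (Fin (k+1)) := by simp
      _ ≤ Nat.card {i : Fin n // IsLtrMin π i} := Nat.card_le_card_of_injective _ this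
  · intro hcard
    have hsc : k + 1 ≤ (Finset.univ.filter (fun i : Fin n => IsLtrMin π i)).card := by
      rwa [Nat.card_eq_fintype_card, Fintype.card_subtype] at hcard
    let e := (Finset.univ.filter (fun i : Fin n => IsLtrMin π i)).orderIsoOfFin rfl
    have hmem : ∀ x, IsLtrMin π (e x : Fin n) := by
      intro x
      have := (e x).2
      simpa using (Finset.mem_filter.1 this).2
    refine ⟨fun a => (e (Fin.castLE hsc a) : Fin n), ?_, ?_⟩
    · intro a b hab
      exact Subtype.coe_lt_coe.2 (e.strictMono (Fin.strictMono_castLE hsc hab))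
    · intro a b hab
      have hflt : (e (Fin.castLE hsc a) : Fin n) < e (Fin.castLE hsc b) :=
        Subtype.coe_lt_coe.2 (e.strictMono (Fin.strictMono_castLE hsc hab))
      exact hmem (Fin.castLE hsc b) _ hflt
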